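/- Let (−)^‡ be the linear involution of the completed ring of symmetric functions defined on Schur functions by s_λ^‡ = (−1)^{|λ|} s_{λ†}, where λ† is the transpose partition. Then Σ_{n≥0} σ_n^‡ t^n = (Σ_{n≥0} σ_n t^n)^{−1} as formal power series in t; in particular σ_0^‡ = σ_0^{−1}. -/

import Mathlib

open scoped Classical

abbrev SymFn := MvPowerSeries ℕ ℚ

namespace SymFn

noncomputable def cf (F : SymFn) (d : ℕ →₀ ℕ) : ℚ := MvPowerSeries.coeff d F
noncomputable def ofCf (c : (ℕ →₀ ℕ) → ℚ) : SymFn := c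
noncomputable def seriesSum {ι : Type*} (f : ι → SymFn) : SymFn :=
  ofCf fun d => ∑' i, cf (f i) d
def degOf (d : ℕ →₀ ℕ) : ℕ := d.sum fun _ k => k
noncomputable def h (n : ℕ) : SymFn := ofCf fun d => if degOf d = n then 1 else 0

/-- `h` indexed by an integer; zero for negative indices. -/
noncomputable def hz (z : ℤ) : SymFn := if z < 0 then 0 else h z.toNat

/-- The Schur function of a partition, presented as its weakly decreasing list of
parts `l`, via the Jacobi–Trudi determinant `s_λ = det(h_{λ_i − i + j})`. -/
noncomputable def schurList (l : List ℕ) : SymFn :=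
  Matrix.det (fun i j : Fin l.length => hz ((l.get i : ℤ) - (i : ℤ) + (j : ℤ)))

/-- The weakly decreasing list of parts of a partition. -/
def partsList {n : ℕ} (lam : Nat.Partition n) : List ℕ :=
  (lam.parts.sort (· ≤ ·)).reverse

/-- The Schur function `s_λ`. -/
noncomputable def schur {n : ℕ} (lam : Nat.Partition n) : SymFn :=
  schurList (partsList lam)

/-- The list of parts of the transpose (conjugate) of the partition with
weakly decreasing part list `l`. -/
def conjList (l : List ℕ) : List ℕ :=
  ((List.range l.sum).map fun j => Multiset.card ((l : Multiset ℕ).filter fun a => j < a)).filter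
    (fun x => 0 < x)

end SymFn

namespace SymFn

/-- The image of the Schur function under the involution `(−)^‡`,
`s_λ^‡ = (−1)^{|λ|} s_{λ†}`, for `λ` given by its weakly decreasing part list. -/
noncomputable def schurListDdag (l : List ℕ) : SymFn :=
  ((-1 : ℚ) ^ l.sum) • schurList (conjList l)

/-- The part list of the one-row partition `(k)`. -/
def rowList (k : ℕ) : List ℕ := if k = 0 then [] else [k]

/-- `σ_n = Σ_{k ≥ n} C(k,n) s_{(k)}`. -/
noncomputable def sigma (n : ℕ) : SymFn :=
  seriesSum fun k => (k.choose n : ℚ) • schurList (rowList k)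

/-- `σ_n^‡`, the image of `σ_n = Σ_{k ≥ n} C(k,n) s_{(k)}` under the linear
involution `(−)^‡` (which sends `s_λ` to `(−1)^{|λ|} s_{λ†}` and is extended
linearly to infinite sums). -/
noncomputable def sigmaDdag (n : ℕ) : SymFn :=
  seriesSum fun k => (k.choose n : ℚ) • schurListDdag (rowList k)

end SymFn


namespace SymFn

lemma cf_h (n : ℕ) (d : ℕ →₀ ℕ) : cf (h n) d = if degOf d = n then 1 else 0 := rfl
lemma cf_seriesSum {ι : Type*} (f : ι → SymFn) (d) : cf (seriesSum f) d = ∑' i, cf (f i) d := rfl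
lemma degOf_add (a b : ℕ →₀ ℕ) : degOf (a + b) = degOf a + degOf b := by
  simpa [degOf] using Finsupp.sum_add_index' (fun _ => rfl) (fun _ _ _ => rfl)
lemma degOf_eq_zero {d : ℕ →₀ ℕ} : degOf d = 0 ↔ d = 0 := by
  constructor
  · intro hd
    ext a
    by_cases ha : a ∈ d.support
    · exact Finset.sum_eq_zero_iff.mp hd a ha
    · simpa using Finsupp.notMem_support_iff.mp ha
  · rintro rfl; simp [degOf]
lemma h_zero : h 0 = 1 := by
  apply MvPowerSeries.ext
  intro d
  rw [MvPowerSeries.coeff_one]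
  show (if degOf d = 0 then (1:ℚ) else 0) = _
  simp [degOf_eq_zero]
lemma hz_coe (n : ℕ) : hz (n : ℤ) = h n := by simp [hz]
lemma hz_neg {z : ℤ} (hlt : z < 0) : hz z = 0 := by simp [hz, hlt]
lemma cf_smul (c : ℚ) (F : SymFn) (d) : cf (c • F) d = c * cf F d := by
  simp [cf]
lemma cf_mul (F G : SymFn) (d) :
    cf (F * G) d = ∑ p ∈ Finset.HasAntidiagonal.antidiagonal d, cf F p.1 * cf G p.2 :=
  MvPowerSeries.coeff_mul d F G
lemma cf_one (d) : cf 1 d = if d = 0 then 1 else 0 := MvPowerSeries.coeff_one d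

/-- Homogeneity predicate. -/
def IsHom (F : SymFn) (k : ℕ) : Prop := ∀ d, degOf d ≠ k → cf F d = 0
lemma isHom_h (n : ℕ) : IsHom (h n) n := fun d hd => by simp [cf_h, hd]
lemma isHom_zero (k : ℕ) : IsHom 0 k := fun d _ => by simp [cf]
lemma isHom_one : IsHom 1 0 := by rw [← h_zero]; exact isHom_h 0
lemma isHom_mul {F G : SymFn} {a b : ℕ} (hF : IsHom F a) (hG : IsHom G b) :
    IsHom (F * G) (a + b) := by
  intro d hd
  rw [cf_mul]
  refine Finset.sum_eq_zero fun p hp => ?_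
  rw [Finset.HasAntidiagonal.mem_antidiagonal] at hp
  by_cases h1 : degOf p.1 = a
  · have h2 : degOf p.2 ≠ b := fun h2 => hd (by rw [← hp, degOf_add, h1, h2])
    rw [hG p.2 h2, mul_zero]
  · rw [hF p.1 h1, zero_mul]
lemma isHom_prod {ι : Type*} (s : Finset ι) (f : ι → SymFn) (deg : ι → ℕ)
    (hf : ∀ i ∈ s, IsHom (f i) (deg i)) :
    IsHom (∏ i ∈ s, f i) (∑ i ∈ s, deg i) := by
  classical
  induction s using Finset.induction_on with
  | empty => simpa using isHom_one
  | insert a s' hnot ih =>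
    rw [Finset.prod_insert hnot, Finset.sum_insert hnot]
    exact isHom_mul (hf a (Finset.mem_insert_self _ _))
      (ih fun i hi => hf i (Finset.mem_insert_of_mem hi))
lemma isHom_zsmul {F : SymFn} {k : ℕ} (c : ℤ) (hF : IsHom F k) : IsHom (c • F) k := by
  intro d hd
  rw [← Int.cast_smul_eq_zsmul ℚ, cf_smul, hF d hd, mul_zero]

/-- The matrix-form `e_k` (dual Jacobi–Trudi determinant). -/
noncomputable def EkMat (k : ℕ) : SymFn :=
  Matrix.det (fun i j : Fin k => hz (1 - (i : ℤ) + (j : ℤ)))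

lemma EkMat_zero : EkMat 0 = 1 := by
  exact Matrix.det_fin_zero

lemma isHom_hz (z : ℤ) (hge : 0 ≤ z) : IsHom (hz z) z.toNat := by
  rw [hz, if_neg (not_lt.mpr hge)]; exact isHom_h _

lemma isHom_EkMat (k : ℕ) : IsHom (EkMat k) k := by
  erw [EkMat, Matrix.det_apply]
  intro d hd
  have : cf (∑ σ : Equiv.Perm (Fin k),
      Equiv.Perm.sign σ • ∏ i, hz (1 - ((σ i : Fin k) : ℤ) + (i : ℤ))) d
      = ∑ σ : Equiv.Perm (Fin k),
        cf (Equiv.Perm.sign σ • ∏ i, hz (1 - ((σ i : Fin k) : ℤ) + (i : ℤ))) d := by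
    simp [cf]
  rw [this]
  refine Finset.sum_eq_zero fun σ _ => ?_
  by_cases hneg : ∃ i : Fin k, 1 - ((σ i : Fin k) : ℤ) + (i : ℤ) < 0
  · obtain ⟨i, hi⟩ := hneg
    have : (∏ i, hz (1 - ((σ i : Fin k) : ℤ) + (i : ℤ))) = 0 :=
      Finset.prod_eq_zero (Finset.mem_univ i) (hz_neg hi)
    simp [this, cf]
  · push_neg at hneg
    have hhom : IsHom (∏ i, hz (1 - ((σ i : Fin k) : ℤ) + (i : ℤ)))
        (∑ i, (1 - ((σ i : Fin k) : ℤ) + (i : ℤ)).toNat) :=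
      isHom_prod _ _ _ fun i _ => isHom_hz _ (hneg i)
    have hdeg : (∑ i : Fin k, (1 - ((σ i : Fin k) : ℤ) + (i : ℤ)).toNat) = k := by
      have : ((∑ i : Fin k, (1 - ((σ i : Fin k) : ℤ) + (i : ℤ)).toNat : ℕ) : ℤ)
          = ∑ i : Fin k, (1 - ((σ i : Fin k) : ℤ) + (i : ℤ)) := by
        push_cast
        exact Finset.sum_congr rfl fun i _ => Int.toNat_of_nonneg (hneg i)
      have h2 : (∑ i : Fin k, (1 - ((σ i : Fin k) : ℤ) + (i : ℤ))) = k := by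
        rw [Finset.sum_add_distrib, Finset.sum_sub_distrib]
        have : ∑ i : Fin k, ((σ i : Fin k) : ℤ) = ∑ i : Fin k, (i : ℤ) :=
          Equiv.sum_comp σ (fun i => (i : ℤ))
        simp [this]
      omega
    rw [← hdeg] at hd
    exact (isHom_zsmul _ hhom) d hd

lemma det_shift : ∀ (j n : ℕ),
    Matrix.det (fun a b : Fin n =>
        hz ((if (b : ℕ) < j then (b : ℤ) else (b : ℤ) + 1) - (a : ℤ)))
      = EkMat (n - j) := by
  intro j
  induction j with
  | zero =>
    intro n
    rw [Nat.sub_zero, EkMat]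
    congr 1
    funext a b
    simp only [Nat.not_lt_zero, if_false]
    congr 1
    ring
  | succ j ih =>
    intro n
    match n with
    | 0 => erw [Nat.zero_sub, EkMat_zero, Matrix.det_fin_zero]
    | m + 1 =>
      erw [Matrix.det_succ_column_zero, Finset.sum_eq_single (0 : Fin (m+1))]
      · have h00 : (if ((0 : Fin (m+1)) : ℕ) < j+1 then ((0 : Fin (m+1)) : ℤ)
            else ((0 : Fin (m+1)) : ℤ) + 1) - ((0 : Fin (m+1)) : ℤ) = 0 := by
          simp
        have hsub : (Matrix.submatrix
            (fun a b : Fin (m+1) =>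
              hz ((if (b : ℕ) < j+1 then (b : ℤ) else (b : ℤ) + 1) - (a : ℤ)))
            (Fin.succAbove 0) Fin.succ)
            = fun a b : Fin m =>
              hz ((if (b : ℕ) < j then (b : ℤ) else (b : ℤ) + 1) - (a : ℤ)) := by
          funext a b
          simp only [Matrix.submatrix, Matrix.of_apply, Matrix.submatrix_apply, Fin.zero_succAbove, Fin.val_succ]
          have hiff : (b : ℕ) + 1 < j + 1 ↔ (b : ℕ) < j := Nat.succ_lt_succ_iff
          by_cases hb : (b : ℕ) < j
          · rw [if_pos (hiff.mpr hb), if_pos hb]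
            push_cast
            congr 1
            ring
          · rw [if_neg (fun hc => hb (hiff.mp hc)), if_neg hb]
            push_cast
            congr 1
            ring
        have hz0 : hz 0 = 1 := by
          rw [show (0:ℤ) = ((0:ℕ):ℤ) from rfl, hz_coe, h_zero]
        rw [h00, hz0, hsub, ih m]
        simp [Nat.succ_sub_succ]
      · intro i _ hi
        have : (if ((0 : Fin (m+1)) : ℕ) < j+1 then ((0 : Fin (m+1)) : ℤ)
            else ((0 : Fin (m+1)) : ℤ) + 1) - (i : ℤ) = -(i : ℤ) := by simp
        rw [this, hz_neg, mul_zero, zero_mul]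
        have : 0 < (i : ℕ) := Nat.pos_of_ne_zero (fun hc => hi (Fin.ext hc))
        omega
      · intro hc
        exact absurd (Finset.mem_univ _) hc

lemma smul_neg_one_pow (j : ℕ) (F : SymFn) :
    ((-1:ℚ)^j) • F = (-1 : SymFn)^j * F := by
  rw [Algebra.smul_def, map_pow, map_neg, map_one]

lemma newton (N : ℕ) :
    (∑ j ∈ Finset.range (N+1), ((-1:ℚ)^j) • (h j * EkMat (N - j)))
      = if N = 0 then 1 else 0 := by
  match N with
  | 0 => simp [h_zero, EkMat_zero]
  | n + 1 =>
    rw [if_neg (Nat.succ_ne_zero n)]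
    set A : Matrix (Fin (n+2)) (Fin (n+2)) SymFn :=
      fun i j => if i = 0 then hz (j : ℤ) else hz ((j : ℤ) - (i : ℤ) + 1) with hA
    have hdet0 : A.det = 0 := by
      apply Matrix.det_zero_of_row_eq (i := 0) (j := 1)
      · exact zero_ne_one
      · funext j
        have h1 : ((1 : Fin (n+2)) : ℤ) = 1 := by norm_num
        simp only [hA, if_pos rfl, if_neg (one_ne_zero (α := Fin (n+2))), h1]
        congr 1
        ring
    have hexp := Matrix.det_succ_row_zero A
    rw [hdet0] at hexp
    have hval : ∀ (j : Fin (n+2)) (b : Fin (n+1)),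
        ((j.succAbove b : Fin (n+2)) : ℤ)
          = (if (b : ℕ) < (j : ℕ) then (b : ℤ) else (b : ℤ) + 1) := by
      intro j b
      rw [Fin.succAbove]
      by_cases hb : b.castSucc < j
      · rw [if_pos hb, if_pos (by simpa [Fin.lt_def] using hb)]
        simp
      · rw [if_neg hb, if_neg (by simpa [Fin.lt_def] using hb)]
        simp
    have hsub : ∀ j : Fin (n+2),
        (A.submatrix Fin.succ j.succAbove).det = EkMat (n + 1 - (j : ℕ)) := by
      intro j
      rw [← det_shift (j : ℕ) (n+1)]
      congr 1
      funext a b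
      simp only [Matrix.submatrix, Matrix.of_apply, Matrix.submatrix_apply, hA, if_neg (Fin.succ_ne_zero a), hval j b,
        Fin.val_succ]
      congr 1
      push_cast
      ring
    have hA0 : ∀ j : Fin (n+2), A 0 j = h (j : ℕ) := by
      intro j
      simp only [hA, if_pos rfl]
      exact hz_coe _
    simp only [hsub, hA0] at hexp
    have : ∑ j ∈ Finset.range (n+2), ((-1:ℚ)^j) • (h j * EkMat (n + 1 - j))
        = ∑ j : Fin (n+2), (-1 : SymFn)^(j:ℕ) * h (j:ℕ) * EkMat (n + 1 - (j:ℕ)) := by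
      rw [← Fin.sum_univ_eq_sum_range (fun j => ((-1:ℚ)^j) • (h j * EkMat (n + 1 - j))) (n+2)]
      refine Finset.sum_congr rfl fun j _ => ?_
      rw [smul_neg_one_pow, mul_assoc]
    rw [this, ← hexp]

lemma cf_sum {ι : Type*} (s : Finset ι) (f : ι → SymFn) (d) :
    cf (∑ i ∈ s, f i) d = ∑ i ∈ s, cf (f i) d := by simp [cf]

lemma keyAux (d : ℕ →₀ ℕ) :
    ∑ p ∈ Finset.HasAntidiagonal.antidiagonal d, ((-1:ℚ)^(degOf p.1)) * cf (EkMat (degOf p.2)) p.2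
      = if d = 0 then 1 else 0 := by
  have h1 : cf (∑ j ∈ Finset.range (degOf d + 1),
      ((-1:ℚ)^j) • (h j * EkMat (degOf d - j))) d = if d = 0 then 1 else 0 := by
    rw [newton]
    by_cases hd : d = 0
    · rw [if_pos (by rw [hd]; simp [degOf]), if_pos hd, cf_one, if_pos hd]
    · rw [if_neg (fun hc => hd (degOf_eq_zero.mp hc)), if_neg hd]
      simp [cf]
  rw [← h1, cf_sum]
  simp only [cf_smul, cf_mul, cf_h, Finset.mul_sum]
  rw [Finset.sum_comm]
  refine Finset.sum_congr rfl fun p hp => ?_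
  rw [Finset.HasAntidiagonal.mem_antidiagonal] at hp
  have hdeg : degOf p.1 + degOf p.2 = degOf d := by rw [← degOf_add, hp]
  rw [Finset.sum_eq_single_of_mem (degOf p.1)
    (Finset.mem_range.mpr (by omega))]
  · rw [if_pos rfl, one_mul, show degOf d - degOf p.1 = degOf p.2 by omega]
  · intro j _ hj
    rw [if_neg (fun hc => hj hc.symm), zero_mul, mul_zero]

lemma key (d : ℕ →₀ ℕ) :
    ∑ p ∈ Finset.HasAntidiagonal.antidiagonal d, ((-1:ℚ)^(degOf p.1)) * cf (EkMat (degOf p.1)) p.1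
      = if d = 0 then 1 else 0 := by
  have hswap : ∑ p ∈ Finset.HasAntidiagonal.antidiagonal d,
      ((-1:ℚ)^(degOf p.2)) * cf (EkMat (degOf p.2)) p.2
      = ∑ p ∈ Finset.HasAntidiagonal.antidiagonal d,
        ((-1:ℚ)^(degOf p.1)) * cf (EkMat (degOf p.1)) p.1 := by
    conv_rhs => rw [← Finset.HasAntidiagonal.map_swap_antidiagonal (n := d)]
    rw [Finset.sum_map]
    rfl
  rw [← hswap]
  have h2 : ∑ p ∈ Finset.HasAntidiagonal.antidiagonal d,
      ((-1:ℚ)^(degOf p.2)) * cf (EkMat (degOf p.2)) p.2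
      = ((-1:ℚ)^(degOf d)) * ∑ p ∈ Finset.HasAntidiagonal.antidiagonal d,
        ((-1:ℚ)^(degOf p.1)) * cf (EkMat (degOf p.2)) p.2 := by
    rw [Finset.mul_sum]
    refine Finset.sum_congr rfl fun p hp => ?_
    rw [Finset.HasAntidiagonal.mem_antidiagonal] at hp
    have hdeg : degOf p.1 + degOf p.2 = degOf d := by rw [← degOf_add, hp]
    have hsq : ((-1:ℚ)^(degOf p.1)) * ((-1:ℚ)^(degOf p.1)) = 1 := by
      rw [← pow_add]
      exact Even.neg_one_pow ⟨_, rfl⟩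
    rw [← hdeg, pow_add]
    linear_combination (-((-1:ℚ)^(degOf p.2)) * cf (EkMat (degOf p.2)) p.2) * hsq
  rw [h2, keyAux]
  by_cases hd : d = 0
  · rw [if_pos hd, hd]
    simp [degOf]
  · rw [if_neg hd, mul_zero]

lemma seriesSum_eq_single {ι : Type*} (f : ι → SymFn) (i₀ : ι)
    (hf : ∀ i ≠ i₀, f i = 0) : seriesSum f = f i₀ := by
  apply MvPowerSeries.ext
  intro d
  show (∑' i, cf (f i) d) = cf (f i₀) d
  exact tsum_eq_single i₀ (fun i hi => by rw [hf i hi]; simp [cf])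


lemma schurList_rowList (k : ℕ) : schurList (rowList k) = h k := by
  match k with
  | 0 =>
    rw [rowList, if_pos rfl, h_zero]
    exact Matrix.det_fin_zero
  | m + 1 =>
    erw [rowList, if_neg (Nat.succ_ne_zero m), schurList, Matrix.det_fin_one]
    show hz ((((m+1 : ℕ) : ℤ)) - ((0 : Fin 1) : ℤ) + ((0 : Fin 1) : ℤ)) = h (m+1)
    have : (((m+1 : ℕ) : ℤ)) - ((0 : Fin 1) : ℤ) + ((0 : Fin 1) : ℤ) = ((m+1 : ℕ) : ℤ) := by
      simp
    rw [this, hz_coe]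

lemma conjList_rowList (k : ℕ) : conjList (rowList k) = List.replicate k 1 := by
  match k with
  | 0 => rfl
  | m + 1 =>
    rw [rowList, if_neg (Nat.succ_ne_zero m), conjList]
    have hsum : List.sum [m+1] = m+1 := by simp
    rw [hsum]
    have hmap : (List.range (m+1)).map
        (fun j => Multiset.card (Multiset.filter (fun a => j < a) (([m+1] : List ℕ) : Multiset ℕ)))
        = List.replicate (m+1) 1 := by
      rw [List.eq_replicate_iff]
      refine ⟨by simp, fun b hb => ?_⟩
      rw [List.mem_map] at hb
      obtain ⟨j, hj, rfl⟩ := hb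
      rw [List.mem_range] at hj
      have hfil : Multiset.filter (fun a => j < a) (([m+1] : List ℕ) : Multiset ℕ)
          = {m+1} := by
        have : (([m+1] : List ℕ) : Multiset ℕ) = {m+1} := rfl
        rw [this, Multiset.filter_singleton, if_pos hj]
      rw [hfil]
      rfl
    rw [hmap]
    apply List.filter_eq_self.mpr
    intro a ha
    have ha1 : a = 1 := List.eq_of_mem_replicate ha
    subst ha1
    decide

lemma schurList_replicate (k : ℕ) : schurList (List.replicate k 1) = EkMat k := by
  rw [schurList, EkMat]
  erw [← Matrix.det_submatrix_equiv_self (finCongr (List.length_replicate (n := k) (a := 1)))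
      (fun i j : Fin k => hz (1 - (i : ℤ) + (j : ℤ)))]
  congr 1
  funext a b
  simp only [Matrix.submatrix, Matrix.of_apply, Matrix.submatrix_apply, finCongr_apply, Fin.coe_cast]
  rw [List.get_eq_getElem, List.getElem_replicate]
  norm_num

lemma ddag_rowList (k : ℕ) : schurListDdag (rowList k) = ((-1:ℚ)^k) • EkMat k := by
  rw [schurListDdag, conjList_rowList, schurList_replicate]
  congr 2
  match k with
  | 0 => rfl
  | m + 1 =>
    rw [rowList, if_neg (Nat.succ_ne_zero m)]
    simp

lemma cf_sigma (n : ℕ) (d : ℕ →₀ ℕ) : cf (sigma n) d = ((degOf d).choose n : ℚ) := by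
  rw [sigma, cf_seriesSum, tsum_eq_single (degOf d)]
  · rw [cf_smul, schurList_rowList, cf_h, if_pos rfl, mul_one]
  · intro k hk
    rw [cf_smul, schurList_rowList, cf_h, if_neg (Ne.symm hk), mul_zero]

lemma cf_sigmaDdag (n : ℕ) (d : ℕ →₀ ℕ) :
    cf (sigmaDdag n) d
      = ((degOf d).choose n : ℚ) * (((-1:ℚ)^(degOf d)) * cf (EkMat (degOf d)) d) := by
  rw [sigmaDdag, cf_seriesSum, tsum_eq_single (degOf d)]
  · rw [cf_smul, ddag_rowList, cf_smul]
  · intro k hk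
    rw [cf_smul, ddag_rowList, cf_smul, isHom_EkMat k d (Ne.symm hk), mul_zero, mul_zero]

lemma sigma_convolution (m : ℕ) :
    ∑ p ∈ Finset.HasAntidiagonal.antidiagonal m, sigmaDdag p.1 * sigma p.2
      = if m = 0 then 1 else 0 := by
  apply MvPowerSeries.ext
  intro d
  show cf (∑ p ∈ Finset.HasAntidiagonal.antidiagonal m, sigmaDdag p.1 * sigma p.2) d
      = cf (if m = 0 then 1 else 0) d
  rw [cf_sum]
  have hterm : ∀ p ∈ Finset.HasAntidiagonal.antidiagonal m, cf (sigmaDdag p.1 * sigma p.2) d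
      = ∑ q ∈ Finset.HasAntidiagonal.antidiagonal d,
          (((degOf q.1).choose p.1 : ℚ)
              * (((-1:ℚ)^(degOf q.1)) * cf (EkMat (degOf q.1)) q.1))
            * ((degOf q.2).choose p.2 : ℚ) := by
    intro p _
    rw [cf_mul]
    exact Finset.sum_congr rfl fun q _ => by rw [cf_sigmaDdag, cf_sigma]
  rw [Finset.sum_congr rfl hterm, Finset.sum_comm]
  have hinner : ∀ q ∈ Finset.HasAntidiagonal.antidiagonal d,
      (∑ p ∈ Finset.HasAntidiagonal.antidiagonal m,
        (((degOf q.1).choose p.1 : ℚ)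
            * (((-1:ℚ)^(degOf q.1)) * cf (EkMat (degOf q.1)) q.1))
          * ((degOf q.2).choose p.2 : ℚ))
        = ((degOf d).choose m : ℚ)
            * (((-1:ℚ)^(degOf q.1)) * cf (EkMat (degOf q.1)) q.1) := by
    intro q hq
    rw [Finset.HasAntidiagonal.mem_antidiagonal] at hq
    have hdeg : degOf q.1 + degOf q.2 = degOf d := by rw [← degOf_add, hq]
    have hvan : ((degOf d).choose m : ℚ)
        = ∑ p ∈ Finset.HasAntidiagonal.antidiagonal m,
            ((degOf q.1).choose p.1 : ℚ) * ((degOf q.2).choose p.2 : ℚ) := by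
      rw [← hdeg, Nat.add_choose_eq]
      push_cast
      rfl
    rw [hvan, Finset.sum_mul]
    refine Finset.sum_congr rfl fun p _ => ?_
    ring
  rw [Finset.sum_congr rfl hinner, ← Finset.mul_sum, key]
  by_cases hd : d = 0
  · subst hd
    rw [if_pos rfl, mul_one]
    have : degOf (0 : ℕ →₀ ℕ) = 0 := by simp [degOf]
    rw [this]
    by_cases hm : m = 0
    · subst hm
      rw [if_pos rfl, cf_one, if_pos rfl]
      norm_num
    · rw [if_neg hm, Nat.choose_eq_zero_of_lt (by omega)]
      simp [cf]
  · rw [if_neg hd, mul_zero]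
    by_cases hm : m = 0
    · subst hm
      rw [if_pos rfl, cf_one, if_neg hd]
    · rw [if_neg hm]
      simp [cf]

end SymFn

/-- Sum of a family of formal power series in `t` with coefficients in the completed
ring of symmetric functions, formed coefficientwise. -/
noncomputable def psSum {ι : Type*} (f : ι → PowerSeries SymFn) : PowerSeries SymFn :=
  PowerSeries.mk fun m => SymFn.seriesSum fun i => PowerSeries.coeff m (f i)

namespace SymFn

lemma coeff_psSum_CX (g : ℕ → SymFn) (m : ℕ) :
    PowerSeries.coeff m
        (psSum fun n => PowerSeries.C (g n) * PowerSeries.X ^ n) = g m := by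
  rw [psSum, PowerSeries.coeff_mk]
  have h1 : seriesSum (fun i =>
        PowerSeries.coeff m (PowerSeries.C (g i) * PowerSeries.X ^ i))
      = PowerSeries.coeff m (PowerSeries.C (g m) * PowerSeries.X ^ m) := by
    apply seriesSum_eq_single
    intro i hi
    rw [PowerSeries.coeff_C_mul, PowerSeries.coeff_X_pow, if_neg (Ne.symm hi), mul_zero]
  rw [h1, PowerSeries.coeff_C_mul, PowerSeries.coeff_X_pow, if_pos rfl, mul_one]

end SymFn

/-- `Σ_{n≥0} σ_n^‡ t^n = (Σ_{n≥0} σ_n t^n)^{−1}` as formal power series in `t`;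
in particular `σ_0^‡ = σ_0^{−1}`. -/
theorem sigmaDdag_generating_function_inverse :
    (psSum fun n => PowerSeries.C (SymFn.sigmaDdag n) * PowerSeries.X ^ n) *
        (psSum fun n => PowerSeries.C (SymFn.sigma n) * PowerSeries.X ^ n) = 1 ∧
      SymFn.sigmaDdag 0 * SymFn.sigma 0 = 1 := by
  have hmain : ∀ m : ℕ,
      PowerSeries.coeff m
          ((psSum fun n => PowerSeries.C (SymFn.sigmaDdag n) * PowerSeries.X ^ n) *
            (psSum fun n => PowerSeries.C (SymFn.sigma n) * PowerSeries.X ^ n))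
        = if m = 0 then 1 else 0 := by
    intro m
    rw [PowerSeries.coeff_mul]
    have : ∀ p ∈ Finset.HasAntidiagonal.antidiagonal m,
        PowerSeries.coeff p.1
            (psSum fun n => PowerSeries.C (SymFn.sigmaDdag n) * PowerSeries.X ^ n) *
          PowerSeries.coeff p.2
            (psSum fun n => PowerSeries.C (SymFn.sigma n) * PowerSeries.X ^ n)
          = SymFn.sigmaDdag p.1 * SymFn.sigma p.2 := by
      intro p _
      rw [SymFn.coeff_psSum_CX, SymFn.coeff_psSum_CX]
    rw [Finset.sum_congr rfl this, SymFn.sigma_convolution]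
  constructor
  · apply PowerSeries.ext
    intro m
    rw [hmain m, PowerSeries.coeff_one]
  · have h0 := hmain 0
    rw [PowerSeries.coeff_mul, Finset.Nat.antidiagonal_zero] at h0
    simpa [SymFn.coeff_psSum_CX] using h0
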